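/- Every non-boundary vertex lies in exactly two cells (Section 5, two-representations claim): For every m ≥ 1 and every x ∈ V_m \ V_0, there are exactly two words w ∈ (Fin n)^m such that x ∈ f_w(V_0). -/

import Mathlib

open Finset

noncomputable section

/-- Ambient Euclidean space `ℝ^{n-1}`. -/
abbrev Amb (n : ℕ) := EuclideanSpace ℝ (Fin (n - 1))

/-- The contraction `f_i(x) = (x + x_i)/2`. -/
def fmap {n : ℕ} (pts : Fin n → Amb n) (i : Fin n) (x : Amb n) : Amb n :=
  (2 : ℝ)⁻¹ • (x + pts i)

/-- Composition of contractions along a list (first entry applied last... actually first). -/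
def fList {n : ℕ} (pts : Fin n → Amb n) : List (Fin n) → Amb n → Amb n
  | [] => id
  | i :: t => fmap pts i ∘ fList pts t

/-- The `m`-contraction `f_w = f_{w_0} ∘ ⋯ ∘ f_{w_{m-1}}`. -/
def fWord {n m : ℕ} (pts : Fin n → Amb n) (w : Fin m → Fin n) : Amb n → Amb n :=
  fList pts (List.ofFn w)

/-- The vertex set `V_m = ⋃_w f_w(V_0)`, where `V_0 = {x_0, …, x_{n-1}}`. -/
def V {n : ℕ} (pts : Fin n → Amb n) (m : ℕ) : Set (Amb n) :=
  ⋃ w : Fin m → Fin n, fWord pts w '' Set.range pts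

/-- Adjacency in the graph `Γ_m`. -/
def Adj {n : ℕ} (pts : Fin n → Amb n) (m : ℕ) (x y : Amb n) : Prop :=
  x ≠ y ∧ ∃ w : Fin m → Fin n,
    x ∈ fWord pts w '' Set.range pts ∧ y ∈ fWord pts w '' Set.range pts

/-- The graph Laplacian `Δ_m u (x) = ∑_{y ~ x} (u(x) - u(y))`. -/
def lap {n : ℕ} (pts : Fin n → Amb n) (m : ℕ) (u : Amb n → ℝ) (x : Amb n) : ℝ :=
  ∑ᶠ y ∈ {y | Adj pts m x y}, (u x - u y)

/-- `u` is an eigenfunction of `Δ_m` with eigenvalue `lam`: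
`Δ_m u (x) = lam * u x` for all `x ∈ V_m \ V_0`. -/
def IsEigen {n : ℕ} (pts : Fin n → Amb n) (m : ℕ) (u : Amb n → ℝ) (lam : ℝ) : Prop :=
  ∀ x ∈ V pts m \ V pts 0, lap pts m u x = lam * u x

/-- The point `x_{r,s} = f_a((x_r + x_s)/2)` for a word `a` of length `m-1`. -/
def xpt {n m : ℕ} (pts : Fin n → Amb n) (a : Fin m → Fin n) (r s : Fin n) : Amb n :=
  fWord pts a ((2 : ℝ)⁻¹ • (pts r + pts s))

/-- The graph energy `E_m(u) = ∑_{x ~ y} (u(x) - u(y))²`, summed over unordered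
adjacent pairs (each ordered pair counted once, then halved). -/
def energy {n : ℕ} (pts : Fin n → Amb n) (m : ℕ) (u : Amb n → ℝ) : ℝ :=
  (2 : ℝ)⁻¹ * ∑ᶠ p ∈ {p : Amb n × Amb n | Adj pts m p.1 p.2}, (u p.1 - u p.2) ^ 2


namespace TwoCells

variable {n : ℕ}

def bvec (j : Fin n) : Fin n → ℕ := fun i => if i = j then 1 else 0

def base : List (Fin n) → Fin n → ℕ
  | [] => fun _ => 0
  | a :: t => fun i => base t i + (if i = a then 2 ^ t.length else 0)

lemma sum_base (l : List (Fin n)) : ∑ i, base l i = 2 ^ l.length - 1 := by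
  induction l with
  | nil => simp [base]
  | cons a t ih =>
    simp only [base, Finset.sum_add_distrib, ih, Finset.sum_ite_eq' Finset.univ a,
      Finset.mem_univ, if_true, List.length_cons]
    have : (1:ℕ) ≤ 2 ^ t.length := Nat.one_le_two_pow
    rw [pow_succ]; omega

lemma sum_coeff (l : List (Fin n)) (j : Fin n) :
    ∑ i, (base l i + bvec j i) = 2 ^ l.length := by
  rw [Finset.sum_add_distrib, sum_base]
  simp only [bvec, Finset.sum_ite_eq' Finset.univ j, Finset.mem_univ, if_true]
  have : (1:ℕ) ≤ 2 ^ l.length := Nat.one_le_two_pow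
  omega

lemma fList_pts (pts : Fin n → Amb n) (l : List (Fin n)) (j : Fin n) :
    fList pts l (pts j)
      = ((2:ℝ) ^ l.length)⁻¹ • ∑ i, ((base l i + bvec j i : ℕ) : ℝ) • pts i := by
  induction l with
  | nil =>
    simp only [fList, id, List.length_nil, pow_zero, inv_one, one_smul, base, bvec]
    simp [Nat.cast_ite, ite_smul]
  | cons a t ih =>
    simp only [fList, Function.comp_apply, fmap, ih, List.length_cons]
    have hco : ∀ i : Fin n, ((base (a::t) i + bvec j i : ℕ):ℝ)
        = ((base t i + bvec j i : ℕ):ℝ) + (if i = a then (2:ℝ)^t.length else 0) := by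
      intro i
      simp only [base]
      push_cast [apply_ite (Nat.cast : ℕ → ℝ)]
      ring
    have hsum : ∑ i, ((base (a::t) i + bvec j i : ℕ):ℝ) • pts i
        = (∑ i, ((base t i + bvec j i : ℕ):ℝ) • pts i) + (2:ℝ)^t.length • pts a := by
      simp only [hco, add_smul, Finset.sum_add_distrib, ite_smul, zero_smul,
        Finset.sum_ite_eq' Finset.univ a, Finset.mem_univ, if_true]
    rw [hsum]
    match_scalars <;> (field_simp; ring)

lemma coeff_unique (pts : Fin n → Amb n) (hpts : AffineIndependent ℝ pts)
    {l l' : List (Fin n)} {j j' : Fin n} (hlen : l.length = l'.length)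
    (h : fList pts l (pts j) = fList pts l' (pts j')) :
    ∀ i, base l i + bvec j i = base l' i + bvec j' i := by
  set m := l.length with hm
  have h2 : (0:ℝ) < 2 ^ m := by positivity
  set w1 : Fin n → ℝ := fun i => ((base l i + bvec j i : ℕ) : ℝ) / 2 ^ m with hw1
  set w2 : Fin n → ℝ := fun i => ((base l' i + bvec j' i : ℕ) : ℝ) / 2 ^ m with hw2
  have hs1 : ∑ i, w1 i = 1 := by
    rw [hw1, ← Finset.sum_div]
    rw [div_eq_one_iff_eq (ne_of_gt h2)]
    rw [← Nat.cast_sum]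
    rw [sum_coeff]
    push_cast; rfl
  have hs2 : ∑ i, w2 i = 1 := by
    rw [hw2, ← Finset.sum_div, div_eq_one_iff_eq (ne_of_gt h2), ← Nat.cast_sum,
      sum_coeff, ← hlen]
    push_cast; rfl
  have hcomb : Finset.univ.affineCombination ℝ pts w1
      = Finset.univ.affineCombination ℝ pts w2 := by
    rw [Finset.univ.affineCombination_eq_linear_combination _ _ hs1,
        Finset.univ.affineCombination_eq_linear_combination _ _ hs2]
    have e1 : ∑ i, w1 i • pts i = fList pts l (pts j) := by
      rw [fList_pts, ← hm, Finset.smul_sum]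
      refine Finset.sum_congr rfl fun i _ => ?_
      simp only [hw1, smul_smul, div_eq_inv_mul]
    have e2 : ∑ i, w2 i • pts i = fList pts l' (pts j') := by
      rw [fList_pts, ← hlen, Finset.smul_sum]
      refine Finset.sum_congr rfl fun i _ => ?_
      simp only [hw2, smul_smul, div_eq_inv_mul]
    rw [e1, e2, h]
  have hww := (affineIndependent_iff_eq_of_fintype_affineCombination_eq ℝ pts).mp hpts
    w1 w2 hs1 hs2 hcomb
  intro i
  have hwi : w1 i = w2 i := by rw [hww]
  rw [hw1, hw2] at hwi
  simp only [] at hwi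
  field_simp at hwi
  exact_mod_cast hwi

lemma base_replicate (k : ℕ) (b i : Fin n) :
    base (List.replicate k b) i = if i = b then 2 ^ k - 1 else 0 := by
  induction k with
  | zero => simp [base]
  | succ k ih =>
    simp only [List.replicate_succ, base, ih, List.length_replicate]
    have : (1:ℕ) ≤ 2 ^ k := Nat.one_le_two_pow
    split <;> [skip; rfl]
    rw [pow_succ]; omega

lemma boundary_unique : ∀ (t : List (Fin n)) (j b : Fin n),
    (∀ i, base t i + bvec j i = if i = b then 2 ^ t.length else 0) →
    t = List.replicate t.length b ∧ j = b := by
  intro t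
  induction t with
  | nil =>
    intro j b h
    refine ⟨rfl, ?_⟩
    by_contra hj
    have := h j
    simp [base, bvec, hj] at this
  | cons a t ih =>
    intro j b h
    have h1 : (1:ℕ) ≤ 2 ^ t.length := Nat.one_le_two_pow
    have hab : a = b := by
      by_contra hab
      have ha := h a
      simp [base, bvec, hab] at ha
    subst hab
    have h' : ∀ i, base t i + bvec j i = if i = a then 2 ^ t.length else 0 := by
      intro i
      have hi := h i
      simp only [base, List.length_cons] at hi
      rw [pow_succ] at hi
      by_cases hia : i = a
      · subst hia
        simp at hi ⊢
        omega
      · simp only [if_neg hia] at hi ⊢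
        omega
    obtain ⟨ht, hj⟩ := ih j a h'
    exact ⟨by rw [List.length_cons, List.replicate_succ, ← ht], hj⟩

lemma bvec_self (j : Fin n) : bvec j j = 1 := if_pos rfl
lemma bvec_le_one (j i : Fin n) : bvec j i ≤ 1 := by unfold bvec; split <;> omega
lemma bvec_ne {j i : Fin n} (h : i ≠ j) : bvec j i = 0 := if_neg h
lemma eq_of_bvec_pos {j i : Fin n} (h : 0 < bvec j i) : i = j := by
  by_contra hij; rw [bvec_ne hij] at h; omega

/-- boundary coefficient vector -/
def bdry (m : ℕ) (b : Fin n) : Fin n → ℕ := fun i => if i = b then 2 ^ m else 0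

def Reps (m : ℕ) (c : Fin n → ℕ) : Set (List (Fin n)) :=
  {l | l.length = m ∧ ∃ j, ∀ i, base l i + bvec j i = c i}

lemma base_singleton (a : Fin n) : base [a] = bvec a := by
  funext i; simp [base, bvec]

lemma bvec_inj {j j' : Fin n} (h : ∀ i, bvec j i = bvec j' i) : j = j' := by
  have := h j
  rw [bvec_self] at this
  exact eq_of_bvec_pos (by omega)

lemma delta_eq {a j a0 j0 : Fin n} (h : ∀ i, bvec a i + bvec j i = bvec a0 i + bvec j0 i) :
    (a = a0 ∧ j = j0) ∨ (a = j0 ∧ j = a0) := by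
  by_cases haa : a = a0
  · subst haa
    left
    refine ⟨rfl, bvec_inj fun i => ?_⟩
    have := h i
    omega
  · right
    have ha := h a
    rw [bvec_self, bvec_ne haa] at ha
    have h1 : a = j0 := eq_of_bvec_pos (j := j0) (i := a) (by omega)
    refine ⟨h1, ?_⟩
    have hne : (a0 : Fin n) ≠ a := fun e => haa e.symm
    have ha0 := h a0
    rw [bvec_self, bvec_ne hne] at ha0
    exact (eq_of_bvec_pos (j := j) (i := a0) (by omega)).symm

lemma sum_of_reps {m : ℕ} {c : Fin n → ℕ} {l : List (Fin n)} (hl : l ∈ Reps m c) :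
    ∑ i, c i = 2 ^ m := by
  obtain ⟨hlen, j, hco⟩ := hl
  rw [← hlen, ← sum_coeff l j]
  exact Finset.sum_congr rfl fun i _ => (hco i).symm

lemma tail_of_boundary {m : ℕ} {x y j : Fin n} {t : List (Fin n)} {c : Fin n → ℕ}
    (hxy : x ≠ y) (htlen : t.length = m)
    (hcl : ∀ i, (base t i + (if i = x then 2 ^ m else 0)) + bvec j i = c i)
    (hcv : ∀ i, c i = (if i = y then 2 ^ m else 0) + (if i = x then 2 ^ m else 0)) :
    t = List.replicate m y := by
  have key : ∀ i, base t i + bvec j i = if i = y then 2 ^ t.length else 0 := by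
    intro i
    have h1 := hcl i
    have h2 := hcv i
    rw [htlen]
    by_cases hiy : i = y
    · subst hiy
      have hix : ¬ i = x := fun e => hxy (e.symm.trans rfl)
      simp only [eq_self_iff_true, if_true] at h1 h2 ⊢
      simp only [if_neg hix] at h1 h2
      omega
    · simp only [if_neg hiy] at h2 ⊢
      by_cases hix : i = x
      · subst hix
        simp only [eq_self_iff_true, if_true] at h1 h2
        omega
      · simp only [if_neg hix] at h1 h2
        omega
  have := boundary_unique t j y key
  rw [← htlen]; exact this.1

lemma reps_pair (m : ℕ) (hm : 1 ≤ m) :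
    ∀ c : Fin n → ℕ, (∀ b, c ≠ bdry m b) →
    ∀ l0 ∈ Reps m c, ∃ l1 l2 : List (Fin n), l1 ≠ l2 ∧ Reps m c = {l1, l2} := by
  induction m, hm using Nat.le_induction with
  | base =>
    intro c hc l0 hl0
    obtain ⟨hlen, j0, hco⟩ := hl0
    obtain ⟨a0, rfl⟩ := List.length_eq_one_iff.mp hlen
    have hco' : ∀ i, bvec a0 i + bvec j0 i = c i := by
      intro i; rw [← hco i, base_singleton]
    have haj : a0 ≠ j0 := by
      rintro rfl
      apply hc a0
      funext i
      rw [← hco' i]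
      unfold bvec bdry
      split <;> simp
    refine ⟨[a0], [j0], by simpa using haj, ?_⟩
    ext l
    simp only [Set.mem_insert_iff, Set.mem_singleton_iff]
    constructor
    · rintro ⟨hl, j, hcl⟩
      obtain ⟨a, rfl⟩ := List.length_eq_one_iff.mp hl
      have : ∀ i, bvec a i + bvec j i = bvec a0 i + bvec j0 i := by
        intro i; rw [base_singleton] at hcl; rw [hcl i, ← hco' i]
      rcases delta_eq this with ⟨h1, _⟩ | ⟨h1, _⟩
      · left; rw [h1]
      · right; rw [h1]
    · rintro (rfl | rfl)
      · exact ⟨rfl, j0, hco⟩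
      · refine ⟨rfl, a0, fun i => ?_⟩
        rw [base_singleton, ← hco' i]
        omega
  | succ m hm ih =>
    intro c hc l0 hl0
    obtain ⟨hlen, j0, hco⟩ := hl0
    obtain ⟨a0, t0, rfl⟩ := List.exists_of_length_succ l0 hlen
    have ht0len : t0.length = m := by simpa using hlen
    set c' : Fin n → ℕ := fun i => base t0 i + bvec j0 i with hc'def
    have hc' : ∀ i, c i = c' i + (if i = a0 then 2 ^ m else 0) := by
      intro i
      rw [← hco i]
      simp only [base, hc'def, ht0len]
      omega
    have ht0 : t0 ∈ Reps m c' := ⟨ht0len, j0, fun i => rfl⟩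
    have hsum : ∑ i, c i = 2 ^ (m + 1) :=
      sum_of_reps (c := c) (l := a0 :: t0) ⟨hlen, j0, hco⟩
    have h2m : (1:ℕ) ≤ 2 ^ m := Nat.one_le_two_pow
    by_cases hB : ∃ b, c' = bdry m b
    · -- boundary case : c = 2^m (e_{a0} + e_b)
      obtain ⟨b, hb⟩ := hB
      have hba0 : b ≠ a0 := by
        rintro rfl
        apply hc b
        funext i
        have h4 := hc' i
        rw [hb] at h4
        unfold bdry at h4 ⊢
        by_cases hib : i = b <;> simp [hib, pow_succ] at h4 ⊢ <;> omega
      have hcval : ∀ i, c i = (if i = b then 2 ^ m else 0) + (if i = a0 then 2 ^ m else 0) := by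
        intro i; rw [hc' i, hb]; rfl
      refine ⟨a0 :: List.replicate m b, b :: List.replicate m a0, by simp [Ne.symm hba0], ?_⟩
      ext l
      simp only [Set.mem_insert_iff, Set.mem_singleton_iff]
      constructor
      · rintro ⟨hl, j, hcl⟩
        obtain ⟨a, t, rfl⟩ := List.exists_of_length_succ l hl
        have htlen : t.length = m := by simpa using hl
        have hcl' : ∀ i, (base t i + (if i = a then 2 ^ m else 0)) + bvec j i = c i := by
          intro i
          rw [← hcl i]
          simp only [base, htlen]
        have hab : a = b ∨ a = a0 := by
          by_contra hcon
          push_neg at hcon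
          have h1 := hcl' a
          have h2 := hcval a
          simp [hcon.1, hcon.2] at h1 h2
          omega
        rcases hab with hab | hab
        · right
          have ht : t = List.replicate m a0 := by
            refine tail_of_boundary (x := a) (y := a0) (c := c) ?_ htlen hcl' ?_
            · rw [hab]; exact hba0
            · intro i
              rw [hcval i, ← hab, Nat.add_comm]
          rw [hab, ht]
        · left
          have ht : t = List.replicate m b := by
            refine tail_of_boundary (x := a) (y := b) (c := c) ?_ htlen hcl' ?_
            · rw [hab]; exact Ne.symm hba0
            · intro i
              rw [hcval i, ← hab]
          rw [hab, ht]
      · have hmem : ∀ x y : Fin n, x ≠ y →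
            (∀ i, c i = (if i = y then 2 ^ m else 0) + (if i = x then 2 ^ m else 0)) →
            x :: List.replicate m y ∈ Reps (m + 1) c := by
          intro x y hxy hcv
          refine ⟨by simp, y, fun i => ?_⟩
          simp only [base, base_replicate, List.length_replicate, bvec, hcv i]
          by_cases hiy : i = y
          · subst hiy
            have hix : ¬ i = x := fun e => hxy (e.symm.trans rfl)
            simp only [eq_self_iff_true, if_true, if_neg hix]
            omega
          · simp only [if_neg hiy]
            by_cases hix : i = x
            · subst hix
              simp only [eq_self_iff_true, if_true]
              omega
            · simp only [if_neg hix]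
        rintro (rfl | rfl)
        · exact hmem a0 b (Ne.symm hba0) hcval
        · refine hmem b a0 hba0 fun i => ?_
          rw [hcval i]; omega
    · -- non-boundary case
      push_neg at hB
      obtain ⟨t1, t2, htne, hR⟩ := ih c' hB t0 ht0
      refine ⟨a0 :: t1, a0 :: t2, by simpa using htne, ?_⟩
      ext l
      simp only [Set.mem_insert_iff, Set.mem_singleton_iff]
      constructor
      · rintro ⟨hl, j, hcl⟩
        obtain ⟨a, t, rfl⟩ := List.exists_of_length_succ l hl
        have htlen : t.length = m := by simpa using hl
        have hcl' : ∀ i, (base t i + (if i = a then 2 ^ m else 0)) + bvec j i = c i := by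
          intro i
          rw [← hcl i]
          simp only [base, htlen]
        have haa0 : a = a0 := by
          by_contra hne
          have hca : 2 ^ m ≤ c a := by
            have := hcl' a; simp at this; omega
          have hca0 : 2 ^ m ≤ c a0 := by
            have := hc' a0; simp at this; omega
          have hpair : ({a, a0} : Finset (Fin n)).sum c ≤ ∑ i, c i :=
            Finset.sum_le_sum_of_subset (Finset.subset_univ _)
          rw [Finset.sum_pair hne] at hpair
          have hca1 : c a = 2 ^ m := by rw [hsum, pow_succ] at hpair; omega
          have hca2 : c a0 = 2 ^ m := by rw [hsum, pow_succ] at hpair; omega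
          have hrest : ∀ i, i ≠ a → i ≠ a0 → c i = 0 := by
            intro i hia hia0
            have h3 : ({i, a, a0} : Finset (Fin n)).sum c ≤ ∑ i, c i :=
              Finset.sum_le_sum_of_subset (Finset.subset_univ _)
            rw [Finset.sum_insert (by simp [hia, hia0]), Finset.sum_pair hne] at h3
            rw [hsum, pow_succ] at h3
            omega
          apply hB a
          funext i
          have h4 := hc' i
          unfold bdry
          by_cases hia : i = a
          · subst hia
            simp [hne] at h4 ⊢
            omega
          · simp [hia]
            by_cases hia0 : i = a0
            · subst hia0
              simp at h4
              omega
            · have h6 := hrest i hia hia0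
              simp [hia0] at h4
              omega
        subst haa0
        have htmem : t ∈ Reps m c' := by
          refine ⟨htlen, j, fun i => ?_⟩
          have h1 := hcl' i
          have h2 := hc' i
          by_cases hia : i = a
          · subst hia
            simp only [eq_self_iff_true, if_true] at h1 h2
            omega
          · simp only [if_neg hia] at h1 h2
            omega
        rw [hR] at htmem
        rcases htmem with rfl | rfl
        · left; rfl
        · right; rfl
      · rintro (rfl | rfl)
        · have ht1 : t1 ∈ Reps m c' := by rw [hR]; left; rfl
          obtain ⟨ht1len, j, hj⟩ := ht1
          refine ⟨by simp [ht1len], j, fun i => ?_⟩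
          simp only [base, ht1len]
          have h1 := hj i
          have h2 := hc' i
          by_cases hia : i = a0
          · subst hia
            simp only [eq_self_iff_true, if_true] at h2 ⊢
            omega
          · simp only [if_neg hia] at h2 ⊢
            omega
        · have ht2 : t2 ∈ Reps m c' := by rw [hR]; right; rfl
          obtain ⟨ht2len, j, hj⟩ := ht2
          refine ⟨by simp [ht2len], j, fun i => ?_⟩
          simp only [base, ht2len]
          have h1 := hj i
          have h2 := hc' i
          by_cases hia : i = a0
          · subst hia
            simp only [eq_self_iff_true, if_true] at h2 ⊢
            omega
          · simp only [if_neg hia] at h2 ⊢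
            omega


end TwoCells

open TwoCells in
/-- Every non-boundary vertex of V_m lies in exactly two cells of level m. -/
theorem vertex_in_exactly_two_cells
    (n : ℕ) (hn : 2 ≤ n) (pts : Fin n → Amb n) (hpts : AffineIndependent ℝ pts)
    (m : ℕ) (hm : 1 ≤ m) (x : Amb n) (hx : x ∈ V pts m \ V pts 0) :
    {w : Fin m → Fin n | x ∈ fWord pts w '' Set.range pts}.ncard = 2 := by
  classical
  obtain ⟨hxm, hx0⟩ := hx
  have hV0 : V pts 0 = Set.range pts := by
    ext y
    simp [V, fWord, fList]
  rw [hV0] at hx0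
  rw [V, Set.mem_iUnion] at hxm
  obtain ⟨w0, y, ⟨j0, rfl⟩, hxeq⟩ := hxm
  set l0 : List (Fin n) := List.ofFn w0 with hl0def
  have hl0len : l0.length = m := by simp [hl0def]
  set c : Fin n → ℕ := fun i => base l0 i + bvec j0 i with hcdef
  have hl0 : l0 ∈ Reps m c := ⟨hl0len, j0, fun i => rfl⟩
  have hxl0 : fList pts l0 (pts j0) = x := hxeq
  have hnb : ∀ b, c ≠ bdry m b := by
    intro b hcb
    apply hx0
    rw [← hxl0, fList_pts, hl0len]
    have hco2 : ∀ i : Fin n, ((base l0 i + bvec j0 i : ℕ) : ℝ) • pts i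
        = (if i = b then (2:ℝ)^m • pts i else 0) := by
      intro i
      have h5 := congrFun hcb i
      simp only [bdry] at h5
      rw [show (base l0 i + bvec j0 i) = c i from rfl, h5]
      by_cases hib : i = b
      · simp [hib]
      · simp [hib]
    have hsum2 : ∑ i, ((base l0 i + bvec j0 i : ℕ) : ℝ) • pts i = (2:ℝ)^m • pts b := by
      rw [Finset.sum_congr rfl fun i _ => hco2 i,
        Finset.sum_ite_eq' Finset.univ b, if_pos (Finset.mem_univ b)]
    rw [hsum2, smul_smul, inv_mul_cancel₀ (by positivity), one_smul]
    exact ⟨b, rfl⟩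
  obtain ⟨l1, l2, hne, hRe⟩ := reps_pair m hm c hnb l0 hl0
  have himg : List.ofFn '' {w : Fin m → Fin n | x ∈ fWord pts w '' Set.range pts}
      = Reps m c := by
    ext l
    constructor
    · rintro ⟨w, hw, rfl⟩
      obtain ⟨y, ⟨j, rfl⟩, hwx⟩ := hw
      refine ⟨List.length_ofFn, j, ?_⟩
      have hlen2 : (List.ofFn w).length = l0.length := by simp [hl0len]
      exact coeff_unique pts hpts hlen2 (hwx.trans hxl0.symm)
    · rintro ⟨hlen, j, hcl⟩
      refine ⟨fun k => l.get (Fin.cast hlen.symm k), ?_, ?_⟩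
      · show x ∈ fList pts (List.ofFn _) '' Set.range pts
        have hofn : List.ofFn (fun k : Fin m => l.get (Fin.cast hlen.symm k)) = l := by
          apply List.ext_get
          · simp [hlen]
          · intro k h1 h2
            simp [List.get_ofFn]
        rw [hofn]
        refine ⟨pts j, ⟨j, rfl⟩, ?_⟩
        have hflist : fList pts l (pts j) = fList pts l0 (pts j0) := by
          rw [fList_pts, fList_pts, hlen, hl0len]
          congr 1
          refine Finset.sum_congr rfl fun i _ => ?_
          rw [hcl i]
        rw [hflist, hxl0]
      · have hofn : List.ofFn (fun k : Fin m => l.get (Fin.cast hlen.symm k)) = l := by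
          apply List.ext_get
          · simp [hlen]
          · intro k h1 h2
            simp [List.get_ofFn]
        exact hofn
  calc {w : Fin m → Fin n | x ∈ fWord pts w '' Set.range pts}.ncard
      = (List.ofFn '' {w : Fin m → Fin n | x ∈ fWord pts w '' Set.range pts}).ncard :=
        (Set.ncard_image_of_injective _ List.ofFn_injective).symm
    _ = ({l1, l2} : Set (List (Fin n))).ncard := by rw [himg, hRe]
    _ = 2 := Set.ncard_pair hne
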